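/- Let ε ∈ [0,1) and let T^ε be an ε-approximate greedy query tree for π. Then C(T^ε, π) ≤ (12/(1−ε)) · C* · ln( 1 / min_{h∈H} π(h) ), where C* = min_T C(T, π) is the minimum cost over all query trees T whose leaves are H. -/

import Mathlib

open Finset

namespace ActiveLearning

variable {H A : Type*} {m : ℕ}

/-- The total mass of a weight function `v` on a finite set `S`. -/
def mass (v : H → ℝ) (S : Finset H) : ℝ := ∑ s ∈ S, v s

/-- `v` restricted to `S` and normalized. -/
noncomputable def restrict [DecidableEq H] (v : H → ℝ) (S : Finset H) : H → ℝ :=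
  fun h => if h ∈ S then v h / mass v S else 0

/-- The shrinkage `Δ` of a question `qi` on `(S, v)`. -/
noncomputable def shrink [Fintype A] [DecidableEq A] (qi : H → A)
    (S : Finset H) (v : H → ℝ) : ℝ :=
  mass v S - ∑ j : A, (mass v (S.filter fun s => qi s = j)) ^ 2 / mass v S

/-- The collision probability of a distribution `v`. -/
def CP [Fintype H] (v : H → ℝ) : ℝ := ∑ z : H, (v z) ^ 2

/-- Query trees: internal nodes are questions (indexed by `Fin m`), branches are answers,
leaves are hypotheses. -/
inductive QTree (m : ℕ) (H A : Type*) : Type _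
  | leaf : H → QTree m H A
  | node : Fin m → (A → QTree m H A) → QTree m H A

/-- Follow the answers of hypothesis `h` down the tree, returning the leaf reached. -/
def follow (q : Fin m → H → A) : QTree m H A → H → H
  | .leaf h', _ => h'
  | .node i ch, h => follow q (ch (q i h)) h

/-- The cost `c_T(h)`: sum of costs of the questions on the root-to-`h` path. -/
def pathCost (q : Fin m → H → A) (c : Fin m → ℝ) : QTree m H A → H → ℝ
  | .leaf _, _ => 0
  | .node i ch, h => c i + pathCost q c (ch (q i h)) h

/-- The leaves of `T` include `S`: every `h ∈ S` is identified by `T`. -/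
def ValidOn (q : Fin m → H → A) (T : QTree m H A) (S : Finset H) : Prop :=
  ∀ h ∈ S, follow q T h = h

/-- The expected cost `C(T, v)` of a query tree `T` under weights `v`. -/
noncomputable def treeCost [Fintype H] (q : Fin m → H → A) (c : Fin m → ℝ)
    (T : QTree m H A) (v : H → ℝ) : ℝ :=
  ∑ h : H, v h * pathCost q c T h

/-- The questions asked along the root-to-`h` path. -/
def pathQs (q : Fin m → H → A) : QTree m H A → H → List (Fin m)
  | .leaf _, _ => []
  | .node i ch, h => i :: pathQs q (ch (q i h)) h

/-- `T` is a greedy query tree for `π` on version space `S`: at every node it asks a question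
maximizing the shrinkage-cost ratio and recurses on each nonempty answer class. -/
inductive IsGreedy [Fintype A] [DecidableEq A] [DecidableEq H]
    (q : Fin m → H → A) (c : Fin m → ℝ) (π : H → ℝ) :
    QTree m H A → Finset H → Prop
  | leaf (h : H) : IsGreedy q c π (.leaf h) {h}
  | node (S : Finset H) (i : Fin m) (ch : A → QTree m H A)
      (hcard : 1 < S.card)
      (hmax : ∀ j : Fin m,
        shrink (q j) S (restrict π S) / c j ≤ shrink (q i) S (restrict π S) / c i)
      (hch : ∀ a : A, (S.filter fun s => q i s = a).Nonempty →
        IsGreedy q c π (ch a) (S.filter fun s => q i s = a)) :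
      IsGreedy q c π (.node i ch) S

/-- `T` is an `ε`-approximate greedy query tree for `π` on version space `S`. -/
inductive IsApproxGreedy [Fintype A] [DecidableEq A] [DecidableEq H]
    (ε : ℝ) (q : Fin m → H → A) (c : Fin m → ℝ) (π : H → ℝ) :
    QTree m H A → Finset H → Prop
  | leaf (h : H) : IsApproxGreedy ε q c π (.leaf h) {h}
  | node (S : Finset H) (i : Fin m) (ch : A → QTree m H A)
      (hcard : 1 < S.card)
      (happrox : ∀ j : Fin m,
        (1 - ε) * (shrink (q j) S (restrict π S) / c j) ≤
          shrink (q i) S (restrict π S) / c i)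
      (hch : ∀ a : A, (S.filter fun s => q i s = a).Nonempty →
        IsApproxGreedy ε q c π (ch a) (S.filter fun s => q i s = a)) :
      IsApproxGreedy ε q c π (.node i ch) S

/-- `T` is irreducible on version space `S`: every asked question strictly splits the
surviving set. -/
inductive Irreducible [DecidableEq A] (q : Fin m → H → A) :
    QTree m H A → Finset H → Prop
  | leaf (h : H) (S : Finset H) : Irreducible q (.leaf h) S
  | node (S : Finset H) (i : Fin m) (ch : A → QTree m H A)
      (hsplit : ∃ s ∈ S, ∃ t ∈ S, q i s ≠ q i t)
      (hch : ∀ a : A, (S.filter fun s => q i s = a).Nonempty →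
        Irreducible q (ch a) (S.filter fun s => q i s = a)) :
      Irreducible q (.node i ch) S

/-! ### Auxiliary lemmas for the proof of the main theorem -/

set_option linter.unusedSectionVars false

lemma sum_sq_le_sq_sum {ι : Type*} (s : Finset ι) (f : ι → ℝ) (hf : ∀ i ∈ s, 0 ≤ f i) :
    ∑ i ∈ s, f i ^ 2 ≤ (∑ i ∈ s, f i) ^ 2 := by
  have h1 : ∀ i ∈ s, f i ^ 2 ≤ f i * ∑ j ∈ s, f j := by
    intro i hi
    have : f i ≤ ∑ j ∈ s, f j := Finset.single_le_sum hf hi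
    have h0 := hf i hi
    nlinarith
  calc ∑ i ∈ s, f i ^ 2 ≤ ∑ i ∈ s, f i * ∑ j ∈ s, f j := Finset.sum_le_sum h1
    _ = (∑ i ∈ s, f i) ^ 2 := by rw [← Finset.sum_mul]; ring

lemma shrink_alg {ι : Type*} [Fintype ι] (V P : ℝ) (ra sa : ι → ℝ)
    (hV : 0 < V) (hVP : V ≤ P)
    (hrs : ∀ a, ra a ≤ sa a)
    (hR : ∑ a, ra a = V) (hS : ∑ a, sa a = P) :
    V - (∑ a, (ra a) ^ 2) / V ≤ P - (∑ a, (sa a) ^ 2) / P := by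
  set w := P - V with hw
  have hw0 : 0 ≤ w := by simp only [hw]; linarith
  set X := ∑ a, (ra a) ^ 2 with hX
  set Z := ∑ a, ra a * (sa a - ra a) with hZ
  set W2 := ∑ a, (sa a - ra a) ^ 2 with hW2
  set Y := ∑ a, (sa a) ^ 2 with hYdef
  have hY : Y = X + 2 * Z + W2 := by
    have e : ∀ a ∈ (Finset.univ : Finset ι), (sa a)^2 =
        (ra a)^2 + 2*(ra a * (sa a - ra a)) + (sa a - ra a)^2 :=
      fun a _ => by ring
    rw [hYdef, Finset.sum_congr rfl e, Finset.sum_add_distrib, Finset.sum_add_distrib,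
      ← Finset.mul_sum, hX, hZ, hW2]
  have hwsum : ∑ a, (sa a - ra a) = w := by
    rw [Finset.sum_sub_distrib, hR, hS, hw]
  have hsq : W2 ≤ w ^ 2 := by
    rw [hW2, ← hwsum]
    exact sum_sq_le_sq_sum _ _ fun a _ => by linarith [hrs a]
  have hX0 : 0 ≤ X := Finset.sum_nonneg fun a _ => sq_nonneg _
  have hW20 : 0 ≤ W2 := Finset.sum_nonneg fun a _ => sq_nonneg _
  have hK1 : 2 * V * w * Z ≤ w ^ 2 * X + V ^ 2 * W2 := by
    rw [hZ, hX, hW2, Finset.mul_sum, Finset.mul_sum, Finset.mul_sum, ← Finset.sum_add_distrib]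
    refine Finset.sum_le_sum fun a _ => ?_
    nlinarith [sq_nonneg (w * ra a - V * (sa a - ra a))]
  have hP0 : 0 < P := lt_of_lt_of_le hV hVP
  have hPw : P = V + w := by rw [hw]; ring
  have goal2 : P * (V * V - X) ≤ V * (P * P - Y) := by
    rcases eq_or_lt_of_le hw0 with h0 | h0
    · have hzz : ∑ a, (sa a - ra a) = 0 := by rw [hwsum]; exact h0.symm
      have hall : ∀ a, sa a - ra a = 0 := by
        intro a
        exact (Finset.sum_eq_zero_iff_of_nonneg
          (fun b _ => sub_nonneg.2 (hrs b))).1 hzz a (Finset.mem_univ a)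
      have hZ0 : Z = 0 := by
        rw [hZ]; exact Finset.sum_eq_zero fun a _ => by rw [hall a]; ring
      have hW0 : W2 = 0 := by
        rw [hW2]; exact Finset.sum_eq_zero fun a _ => by rw [hall a]; ring
      have hPV : P = V := by rw [hPw, ← h0]; ring
      have hYX : Y = X := by rw [hY, hZ0, hW0]; ring
      rw [hPV, hYX]
    · have hmul : w * (P * (V * V - X)) ≤ w * (V * (P * P - Y)) := by
        rw [hY, hPw]
        nlinarith [mul_le_mul_of_nonneg_left hK1 h0.le,
          mul_le_mul_of_nonneg_left hsq (by nlinarith [hV.le, hw0] : (0:ℝ) ≤ V^2 + V*w)]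
      exact le_of_mul_le_mul_left hmul h0
  have e : P - Y/P - (V - X/V) = (V*(P*P - Y) - P*(V*V - X))/(V*P) := by
    field_simp
  have := div_nonneg (sub_nonneg.2 goal2) (le_of_lt (mul_pos hV hP0))
  linarith [e ▸ this]

section Core
variable [Fintype A] [DecidableEq A] [DecidableEq H]

lemma mass_nonneg {v : H → ℝ} (hv : ∀ h, 0 ≤ v h) (S : Finset H) : 0 ≤ mass v S :=
  Finset.sum_nonneg fun h _ => hv h

lemma mass_mono {v : H → ℝ} (hv : ∀ h, 0 ≤ v h) {R S : Finset H} (hRS : R ⊆ S) :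
    mass v R ≤ mass v S :=
  Finset.sum_le_sum_of_subset_of_nonneg hRS fun h _ _ => hv h

lemma mass_pos {v : H → ℝ} (hv : ∀ h, 0 < v h) {S : Finset H} (hS : S.Nonempty) :
    0 < mass v S :=
  Finset.sum_pos (fun h _ => hv h) hS

lemma mass_eq_zero {v : H → ℝ} (hv : ∀ h, 0 ≤ v h) {S : Finset H} (h : mass v S = 0) :
    ∀ x ∈ S, v x = 0 := fun x hx =>
  (Finset.sum_eq_zero_iff_of_nonneg (fun h _ => hv h)).1 h x hx

lemma mass_fiber (v : H → ℝ) (f : H → A) (S : Finset H) :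
    ∑ a : A, mass v (S.filter fun s => f s = a) = mass v S :=
  Finset.sum_fiberwise S f v

lemma shrink_nonneg {v : H → ℝ} (hv : ∀ h, 0 ≤ v h) (f : H → A) (S : Finset H) :
    0 ≤ shrink f S v := by
  unfold shrink
  rcases eq_or_lt_of_le (mass_nonneg hv S) with h0 | h0
  · have hz : ∀ a : A, mass v (S.filter fun s => f s = a) = 0 := fun a =>
      Finset.sum_eq_zero fun x hx =>
        mass_eq_zero hv h0.symm x (Finset.mem_filter.1 hx).1
    simp [hz, ← h0]
  · have hsum := mass_fiber v f S
    have hle : ∑ a : A, (mass v (S.filter fun s => f s = a)) ^ 2 ≤ mass v S ^ 2 := by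
      rw [← hsum]
      exact sum_sq_le_sq_sum _ _ fun a _ => mass_nonneg hv _
    rw [sub_nonneg, ← Finset.sum_div, div_le_iff₀ h0]
    nlinarith

lemma shrink_mono {v : H → ℝ} (hv : ∀ h, 0 ≤ v h) (f : H → A) {R S : Finset H}
    (hRS : R ⊆ S) : shrink f R v ≤ shrink f S v := by
  rcases eq_or_lt_of_le (mass_nonneg hv R) with h0 | h0
  · have hz : ∀ a : A, mass v (R.filter fun s => f s = a) = 0 := fun a =>
      Finset.sum_eq_zero fun x hx =>
        mass_eq_zero hv h0.symm x (Finset.mem_filter.1 hx).1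
    have : shrink f R v = 0 := by unfold shrink; simp [hz, ← h0]
    rw [this]; exact shrink_nonneg hv f S
  · unfold shrink
    rw [← Finset.sum_div, ← Finset.sum_div]
    exact shrink_alg (mass v R) (mass v S)
      (fun a => mass v (R.filter fun s => f s = a))
      (fun a => mass v (S.filter fun s => f s = a))
      h0 (mass_mono hv hRS)
      (fun a => mass_mono hv (Finset.filter_subset_filter _ hRS))
      (mass_fiber v f R) (mass_fiber v f S)

lemma mass_restrict (v : H → ℝ) {R S : Finset H} (hRS : R ⊆ S) :
    mass (restrict v S) R = mass v R / mass v S := by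
  unfold mass restrict
  rw [Finset.sum_div]
  exact Finset.sum_congr rfl fun x hx => if_pos (hRS hx)

lemma shrink_restrict {v : H → ℝ} (f : H → A) {S : Finset H}
    (hS : mass v S ≠ 0) :
    shrink f S (restrict v S) = shrink f S v / mass v S := by
  unfold shrink
  rw [mass_restrict v (Finset.Subset.refl S)]
  have hfil : ∀ a : A, mass (restrict v S) (S.filter fun s => f s = a)
      = mass v (S.filter fun s => f s = a) / mass v S := fun a =>
    mass_restrict v (Finset.filter_subset _ S)
  rw [Finset.sum_congr rfl fun a _ => by rw [hfil a]]
  rw [sub_div, Finset.sum_div]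
  congr 1
  refine Finset.sum_congr rfl fun a _ => ?_
  rw [div_self hS, div_one, div_pow, div_div]
  congr 1
  ring

lemma shrink_identity {π : H → ℝ} (hπ : ∀ h, 0 ≤ π h) (f : H → A) (S : Finset H) :
    mass π S ^ 2 - ∑ a : A, (mass π (S.filter fun s => f s = a)) ^ 2
      = mass π S * shrink f S π := by
  by_cases hP : mass π S = 0
  · have hz : ∀ a : A, mass π (S.filter fun s => f s = a) = 0 := fun a =>
      Finset.sum_eq_zero fun x hx =>
        mass_eq_zero hπ hP x (Finset.mem_filter.1 hx).1
    unfold shrink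
    simp [hz, hP]
  · unfold shrink
    rw [← Finset.sum_div, mul_sub, mul_div_cancel₀ _ hP]
    ring

lemma cost_node_decomp (q : Fin m → H → A) (c : Fin m → ℝ) (π : H → ℝ)
    (i : Fin m) (ch : A → QTree m H A) (S : Finset H) :
    ∑ h ∈ S, π h * pathCost q c (QTree.node i ch) h
      = c i * mass π S
        + ∑ a : A, ∑ h ∈ S.filter (fun s => q i s = a),
            π h * pathCost q c (ch a) h := by
  have h1 : ∑ h ∈ S, π h * pathCost q c (QTree.node i ch) h
      = ∑ h ∈ S, (π h * c i + π h * pathCost q c (ch (q i h)) h) := by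
    refine Finset.sum_congr rfl fun h _ => ?_
    show π h * (c i + pathCost q c (ch (q i h)) h) = _
    ring
  rw [h1, Finset.sum_add_distrib]
  congr 1
  · rw [← Finset.sum_mul, mul_comm]; rfl
  · rw [← Finset.sum_fiberwise S (q i) (fun h => π h * pathCost q c (ch (q i h)) h)]
    refine Finset.sum_congr rfl fun a _ => Finset.sum_congr rfl fun h hh => ?_
    rw [(Finset.mem_filter.1 hh).2]

/-- Dasgupta-style key lemma: for any tree valid on `S`, the distinct-pair mass of `S`
is at most `M` times the cost of the tree on `S`, whenever `M * c j` dominates the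
shrinkage of every question on every subset of `S₀`. -/
lemma exists_shrink_bound (q : Fin m → H → A) (c : Fin m → ℝ)
    {π : H → ℝ} (hπ : ∀ h, 0 ≤ π h) (M : ℝ) (S₀ : Finset H)
    (hM : ∀ (j : Fin m) (R : Finset H), R ⊆ S₀ → shrink (q j) R π ≤ M * c j) :
    ∀ (T : QTree m H A) (S : Finset H), S ⊆ S₀ → ValidOn q T S →
      mass π S ^ 2 - ∑ h ∈ S, π h ^ 2 ≤ M * ∑ h ∈ S, π h * pathCost q c T h := by
  intro T
  induction T with
  | leaf h' =>
    intro S hS hvalid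
    have hsub : S ⊆ {h'} := fun x hx => by
      rw [Finset.mem_singleton, ← hvalid x hx]; rfl
    have hz : mass π S ^ 2 - ∑ h ∈ S, π h ^ 2 = 0 := by
      rcases Finset.subset_singleton_iff.1 hsub with rfl | rfl
      · simp [mass]
      · simp [mass]
    rw [hz]
    have hc0 : ∀ h ∈ S, π h * pathCost q c (QTree.leaf h') h = 0 := fun h _ => by
      simp [pathCost]
    rw [Finset.sum_congr rfl hc0]
    simp
  | node i ch ih =>
    intro S hS hvalid
    have hQ : ∑ a : A, ∑ h ∈ S.filter (fun s => q i s = a), π h ^ 2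
        = ∑ h ∈ S, π h ^ 2 := Finset.sum_fiberwise S (q i) (fun h => π h ^ 2)
    have hchv : ∀ a : A, ValidOn q (ch a) (S.filter fun s => q i s = a) := by
      intro a h hh
      have hm := Finset.mem_filter.1 hh
      have := hvalid h hm.1
      rw [show follow q (QTree.node i ch) h = follow q (ch (q i h)) h from rfl, hm.2] at this
      exact this
    have hIH : ∀ a : A,
        mass π (S.filter fun s => q i s = a) ^ 2
          - ∑ h ∈ S.filter (fun s => q i s = a), π h ^ 2
        ≤ M * ∑ h ∈ S.filter (fun s => q i s = a), π h * pathCost q c (ch a) h :=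
      fun a => ih a _ ((Finset.filter_subset _ S).trans hS) (hchv a)
    have hshr : mass π S * shrink (q i) S π ≤ mass π S * (M * c i) :=
      mul_le_mul_of_nonneg_left (hM i S hS) (mass_nonneg hπ S)
    calc mass π S ^ 2 - ∑ h ∈ S, π h ^ 2
        = mass π S * shrink (q i) S π
          + ∑ a : A, (mass π (S.filter fun s => q i s = a) ^ 2
              - ∑ h ∈ S.filter (fun s => q i s = a), π h ^ 2) := by
          rw [Finset.sum_sub_distrib, hQ, ← shrink_identity hπ (q i) S]; ring
      _ ≤ mass π S * (M * c i)
          + ∑ a : A, M * ∑ h ∈ S.filter (fun s => q i s = a),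
              π h * pathCost q c (ch a) h :=
          add_le_add hshr (Finset.sum_le_sum fun a _ => hIH a)
      _ = M * ∑ h ∈ S, π h * pathCost q c (QTree.node i ch) h := by
          rw [cost_node_decomp, ← Finset.mul_sum]; ring

lemma Dm_nonneg {π : H → ℝ} (hπ : ∀ h, 0 ≤ π h) (S : Finset H) :
    0 ≤ mass π S ^ 2 - ∑ h ∈ S, π h ^ 2 :=
  sub_nonneg.2 (sum_sq_le_sq_sum S π fun h _ => hπ h)

lemma pathCost_nonneg (q : Fin m → H → A) (c : Fin m → ℝ) (hc : ∀ i, 0 ≤ c i) :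
    ∀ (T : QTree m H A) (h : H), 0 ≤ pathCost q c T h := by
  intro T
  induction T with
  | leaf h' => intro h; simp [pathCost]
  | node i ch ih =>
    intro h
    have := ih (q i h) h
    have := hc i
    show 0 ≤ c i + pathCost q c (ch (q i h)) h
    linarith

lemma numeric_step (eps ci P Cs W L lam childsum : ℝ)
    (h1e : 0 < 1 - eps) (hC : 0 < Cs) (hL : 0 ≤ L)
    (hW0 : 0 ≤ W) (hWC : W ≤ Cs)
    (huC : (1 - eps) * ci * P ≤ Cs)
    (hlam : Cs * lam ≤ -((1 - eps) * ci * P))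
    (hchild : childsum ≤ 1 / (1 - eps) * (W * (L + lam + 1))) :
    ci * P + childsum ≤ 1 / (1 - eps) * Cs * (L + 1) := by
  have key : (1 - eps) * ci * P + W * (L + lam + 1) ≤ Cs * (L + 1) := by
    nlinarith [mul_nonneg (mul_nonneg hC.le (sub_nonneg.2 hWC)) hL,
      mul_nonneg (sub_nonneg.2 hWC) (sub_nonneg.2 huC),
      mul_le_mul_of_nonneg_left hlam hW0, hC]
  have hK : (0:ℝ) < 1 / (1 - eps) := by positivity
  calc ci * P + childsum ≤ ci * P + 1 / (1 - eps) * (W * (L + lam + 1)) := by linarith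
    _ = 1 / (1 - eps) * ((1 - eps) * ci * P + W * (L + lam + 1)) := by
        field_simp
    _ ≤ 1 / (1 - eps) * (Cs * (L + 1)) := mul_le_mul_of_nonneg_left key hK.le
    _ = 1 / (1 - eps) * Cs * (L + 1) := by ring

/-- Main induction: the cost of an `ε`-approximate greedy tree on `S` is bounded via the
potential `log((mass² - collision mass)/d0) + 1`. -/
lemma greedy_cost_aux (q : Fin m → H → A) (c : Fin m → ℝ) (π : H → ℝ)
    (hπ : ∀ h, 0 < π h) (hc : ∀ i, 0 < c i)
    (ε : ℝ) (hε1 : ε < 1)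
    (T' : QTree m H A) (hpc' : ∀ h, 0 < pathCost q c T' h)
    (d0 : ℝ) (hd0 : 0 < d0)
    (hd0le : ∀ R : Finset H, 2 ≤ R.card →
      d0 ≤ mass π R ^ 2 - ∑ h ∈ R, π h ^ 2)
    (hT'v : ∀ h : H, follow q T' h = h)
    {Tg : QTree m H A} {S : Finset H}
    (hg : IsApproxGreedy ε q c π Tg S) :
    ∑ h ∈ S, π h * pathCost q c Tg h
      ≤ (1 / (1 - ε)) * (∑ h ∈ S, π h * pathCost q c T' h) *
          (if 2 ≤ S.card then
            Real.log ((mass π S ^ 2 - ∑ h ∈ S, π h ^ 2) / d0) + 1 else 0) := by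
  induction hg with
  | leaf h =>
    have : ¬ (2 ≤ ({h} : Finset H).card) := by simp
    rw [if_neg this]
    simp [pathCost]
  | node S i ch hcard happrox hch ih =>
    have hπ0 : ∀ h, 0 ≤ π h := fun h => (hπ h).le
    have hSne : S.Nonempty := Finset.card_pos.1 (by omega)
    have hP : 0 < mass π S := mass_pos hπ hSne
    have hPne : mass π S ≠ 0 := ne_of_gt hP
    have h2 : 2 ≤ S.card := hcard
    rw [if_pos h2]
    have h1e : (0:ℝ) < 1 - ε := by linarith
    have hC : 0 < ∑ h ∈ S, π h * pathCost q c T' h :=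
      Finset.sum_pos (fun h _ => mul_pos (hπ h) (hpc' h)) hSne
    have hd0D : d0 ≤ mass π S ^ 2 - ∑ h ∈ S, π h ^ 2 := hd0le S h2
    have hD : 0 < mass π S ^ 2 - ∑ h ∈ S, π h ^ 2 := lt_of_lt_of_le hd0 hd0D
    have hL : 0 ≤ Real.log ((mass π S ^ 2 - ∑ h ∈ S, π h ^ 2) / d0) :=
      Real.log_nonneg ((one_le_div hd0).2 hd0D)
    -- comparison of shrinkages at S, unnormalized
    have happrox' : ∀ j, (1 - ε) * c i * shrink (q j) S π
        ≤ c j * shrink (q i) S π := by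
      intro j
      have hj := happrox j
      have hcjne : c j ≠ 0 := ne_of_gt (hc j)
      have hcine : c i ≠ 0 := ne_of_gt (hc i)
      rw [shrink_restrict _ hPne, shrink_restrict _ hPne] at hj
      have hmul := mul_le_mul_of_nonneg_right hj
        (le_of_lt (mul_pos (mul_pos hP (hc j)) (hc i)))
      have e1 : (1 - ε) * (shrink (q j) S π / mass π S / c j)
          * (mass π S * c j * c i) = (1 - ε) * c i * shrink (q j) S π := by
        field_simp
      have e2 : shrink (q i) S π / mass π S / c i * (mass π S * c j * c i)
          = c j * shrink (q i) S π := by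
        field_simp
      rw [e1, e2] at hmul
      exact hmul
    have hM : ∀ (j : Fin m) (R : Finset H), R ⊆ S →
        shrink (q j) R π ≤ (shrink (q i) S π / ((1 - ε) * c i)) * c j := by
      intro j R hRS
      calc shrink (q j) R π ≤ shrink (q j) S π := shrink_mono hπ0 (q j) hRS
        _ ≤ (shrink (q i) S π / ((1 - ε) * c i)) * c j := by
            rw [div_mul_eq_mul_div, le_div_iff₀ (mul_pos h1e (hc i))]
            nlinarith [happrox' j]
    have hA : mass π S ^ 2 - ∑ h ∈ S, π h ^ 2
        ≤ (shrink (q i) S π / ((1 - ε) * c i)) * ∑ h ∈ S, π h * pathCost q c T' h :=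
      exists_shrink_bound q c hπ0 _ S hM T' S (Finset.Subset.refl S)
        (fun h _ => hT'v h)
    have hshr : (1 - ε) * c i * (mass π S ^ 2 - ∑ h ∈ S, π h ^ 2)
        ≤ shrink (q i) S π * ∑ h ∈ S, π h * pathCost q c T' h := by
      have hmul := mul_le_mul_of_nonneg_left hA (le_of_lt (mul_pos h1e (hc i)))
      have e : (1 - ε) * c i * ((shrink (q i) S π / ((1 - ε) * c i))
          * ∑ h ∈ S, π h * pathCost q c T' h)
          = shrink (q i) S π * ∑ h ∈ S, π h * pathCost q c T' h := by
        rw [show (1 - ε) * c i * ((shrink (q i) S π / ((1 - ε) * c i))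
            * ∑ h ∈ S, π h * pathCost q c T' h)
          = (shrink (q i) S π / ((1 - ε) * c i) * ((1 - ε) * c i))
            * ∑ h ∈ S, π h * pathCost q c T' h from by ring,
          div_mul_cancel₀ _ (ne_of_gt (mul_pos h1e (hc i)))]
      rw [e] at hmul
      exact hmul
    -- fiber facts
    have hQsplit : ∑ a : A, ∑ h ∈ S.filter (fun s => q i s = a), π h ^ 2
        = ∑ h ∈ S, π h ^ 2 := Finset.sum_fiberwise S (q i) (fun h => π h ^ 2)
    have hDa0 : ∀ a : A, 0 ≤ mass π (S.filter fun s => q i s = a) ^ 2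
        - ∑ h ∈ S.filter (fun s => q i s = a), π h ^ 2 :=
      fun a => Dm_nonneg hπ0 _
    have hPshrD : mass π S * shrink (q i) S π
        ≤ mass π S ^ 2 - ∑ h ∈ S, π h ^ 2 := by
      rw [← shrink_identity hπ0 (q i) S]
      have hQa : ∑ a : A, ∑ h ∈ S.filter (fun s => q i s = a), π h ^ 2
          ≤ ∑ a : A, mass π (S.filter fun s => q i s = a) ^ 2 :=
        Finset.sum_le_sum fun a _ => by linarith [hDa0 a]
      rw [hQsplit] at hQa
      linarith
    have huC : (1 - ε) * c i * mass π S ≤ ∑ h ∈ S, π h * pathCost q c T' h := by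
      nlinarith [mul_le_mul_of_nonneg_right hshr hP.le, hPshrD, hD, hC, hP]
    have hDsum : (∑ h ∈ S, π h * pathCost q c T' h)
          * (∑ a : A, (mass π (S.filter fun s => q i s = a) ^ 2
            - ∑ h ∈ S.filter (fun s => q i s = a), π h ^ 2))
        ≤ (mass π S ^ 2 - ∑ h ∈ S, π h ^ 2)
          * ((∑ h ∈ S, π h * pathCost q c T' h) - (1 - ε) * c i * mass π S) := by
      have e : ∑ a : A, (mass π (S.filter fun s => q i s = a) ^ 2
            - ∑ h ∈ S.filter (fun s => q i s = a), π h ^ 2)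
          = (mass π S ^ 2 - ∑ h ∈ S, π h ^ 2)
            - mass π S * shrink (q i) S π := by
        rw [Finset.sum_sub_distrib, hQsplit, ← shrink_identity hπ0 (q i) S]
        ring
      rw [e]
      nlinarith [mul_le_mul_of_nonneg_right hshr hP.le]
    -- bound for each child
    have hchild : ∀ a : A,
        ∑ h ∈ S.filter (fun s => q i s = a), π h * pathCost q c (ch a) h
        ≤ (1 / (1 - ε))
          * (∑ h ∈ S.filter (fun s => q i s = a), π h * pathCost q c T' h)
          * (if 2 ≤ (S.filter (fun s => q i s = a)).card then
              Real.log ((mass π (S.filter fun s => q i s = a) ^ 2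
                - ∑ h ∈ S.filter (fun s => q i s = a), π h ^ 2) / d0) + 1 else 0) := by
      intro a
      by_cases hne : (S.filter (fun s => q i s = a)).Nonempty
      · exact ih a hne
      · rw [Finset.not_nonempty_iff_eq_empty.1 hne]
        simp
    have hCfib0 : ∀ a : A,
        0 ≤ ∑ h ∈ S.filter (fun s => q i s = a), π h * pathCost q c T' h :=
      fun a => Finset.sum_nonneg fun h _ => le_of_lt (mul_pos (hπ h) (hpc' h))
    have hCsplit : ∑ a : A, ∑ h ∈ S.filter (fun s => q i s = a),
          π h * pathCost q c T' h = ∑ h ∈ S, π h * pathCost q c T' h :=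
      Finset.sum_fiberwise S (q i) (fun h => π h * pathCost q c T' h)
    rw [cost_node_decomp]
    by_cases hJ : ∃ a : A, 2 ≤ (S.filter (fun s => q i s = a)).card
    · -- some child still has at least two hypotheses
      obtain ⟨a₀, ha₀⟩ := hJ
      have hg0 : 0 < (∑ h ∈ S, π h * pathCost q c T' h) - (1 - ε) * c i * mass π S := by
        have h1 : d0 ≤ ∑ a : A, (mass π (S.filter fun s => q i s = a) ^ 2
            - ∑ h ∈ S.filter (fun s => q i s = a), π h ^ 2) :=
          le_trans (hd0le _ ha₀)
            (Finset.single_le_sum (fun a _ => hDa0 a) (Finset.mem_univ a₀))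
        have h2' := le_trans (mul_le_mul_of_nonneg_left h1 hC.le) hDsum
        nlinarith [mul_pos hC hd0, hD]
      -- the logarithmic bound for the children
      have hBa : ∀ a : A, 2 ≤ (S.filter (fun s => q i s = a)).card →
          Real.log ((mass π (S.filter fun s => q i s = a) ^ 2
            - ∑ h ∈ S.filter (fun s => q i s = a), π h ^ 2) / d0) + 1
          ≤ Real.log ((mass π S ^ 2 - ∑ h ∈ S, π h ^ 2) / d0)
            + Real.log ((((∑ h ∈ S, π h * pathCost q c T' h) - (1 - ε) * c i * mass π S))
              / (∑ h ∈ S, π h * pathCost q c T' h)) + 1 := by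
        intro a ha
        have hDa : 0 < mass π (S.filter fun s => q i s = a) ^ 2
            - ∑ h ∈ S.filter (fun s => q i s = a), π h ^ 2 :=
          lt_of_lt_of_le hd0 (hd0le _ ha)
        have hle : mass π (S.filter fun s => q i s = a) ^ 2
            - ∑ h ∈ S.filter (fun s => q i s = a), π h ^ 2
            ≤ (mass π S ^ 2 - ∑ h ∈ S, π h ^ 2)
              * ((∑ h ∈ S, π h * pathCost q c T' h) - (1 - ε) * c i * mass π S)
              / (∑ h ∈ S, π h * pathCost q c T' h) := by
          rw [le_div_iff₀ hC]
          have h1 : mass π (S.filter fun s => q i s = a) ^ 2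
              - ∑ h ∈ S.filter (fun s => q i s = a), π h ^ 2
              ≤ ∑ a' : A, (mass π (S.filter fun s => q i s = a') ^ 2
                - ∑ h ∈ S.filter (fun s => q i s = a'), π h ^ 2) :=
            Finset.single_le_sum (fun a' _ => hDa0 a') (Finset.mem_univ a)
          nlinarith [hDsum, mul_le_mul_of_nonneg_right h1 hC.le]
        have hlog := Real.log_le_log (div_pos hDa hd0)
          (div_le_div_of_nonneg_right hle hd0.le)
        have heq : Real.log ((mass π S ^ 2 - ∑ h ∈ S, π h ^ 2)
              * ((∑ h ∈ S, π h * pathCost q c T' h) - (1 - ε) * c i * mass π S)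
              / (∑ h ∈ S, π h * pathCost q c T' h) / d0)
            = Real.log ((mass π S ^ 2 - ∑ h ∈ S, π h ^ 2) / d0)
              + Real.log ((((∑ h ∈ S, π h * pathCost q c T' h)
                  - (1 - ε) * c i * mass π S))
                / (∑ h ∈ S, π h * pathCost q c T' h)) := by
          rw [show (mass π S ^ 2 - ∑ h ∈ S, π h ^ 2)
              * ((∑ h ∈ S, π h * pathCost q c T' h) - (1 - ε) * c i * mass π S)
              / (∑ h ∈ S, π h * pathCost q c T' h) / d0
            = ((mass π S ^ 2 - ∑ h ∈ S, π h ^ 2) / d0)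
              * ((((∑ h ∈ S, π h * pathCost q c T' h) - (1 - ε) * c i * mass π S))
                / (∑ h ∈ S, π h * pathCost q c T' h)) from by ring]
          exact Real.log_mul (ne_of_gt (div_pos hD hd0)) (ne_of_gt (div_pos hg0 hC))
        rw [heq] at hlog
        linarith
      -- abbreviations for the final numeric step
      have hlam' : (∑ h ∈ S, π h * pathCost q c T' h)
            * Real.log ((((∑ h ∈ S, π h * pathCost q c T' h) - (1 - ε) * c i * mass π S))
              / (∑ h ∈ S, π h * pathCost q c T' h))
          ≤ -((1 - ε) * c i * mass π S) := by
        have hq : 0 < (((∑ h ∈ S, π h * pathCost q c T' h) - (1 - ε) * c i * mass π S))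
            / (∑ h ∈ S, π h * pathCost q c T' h) := div_pos hg0 hC
        have h1 := Real.log_le_sub_one_of_pos hq
        have hmul := mul_le_mul_of_nonneg_left h1 hC.le
        have e : (∑ h ∈ S, π h * pathCost q c T' h)
            * ((((∑ h ∈ S, π h * pathCost q c T' h) - (1 - ε) * c i * mass π S))
              / (∑ h ∈ S, π h * pathCost q c T' h) - 1)
            = -((1 - ε) * c i * mass π S) := by
          field_simp
          ring
        rw [e] at hmul
        exact hmul
      -- split the child sum over the large fibers
      have hBsplit : ∑ a : A,
            (∑ h ∈ S.filter (fun s => q i s = a), π h * pathCost q c T' h)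
            * (if 2 ≤ (S.filter (fun s => q i s = a)).card then
                Real.log ((mass π (S.filter fun s => q i s = a) ^ 2
                  - ∑ h ∈ S.filter (fun s => q i s = a), π h ^ 2) / d0) + 1 else 0)
          ≤ (∑ a ∈ Finset.univ.filter
              (fun a : A => 2 ≤ (S.filter (fun s => q i s = a)).card),
              ∑ h ∈ S.filter (fun s => q i s = a), π h * pathCost q c T' h)
            * (Real.log ((mass π S ^ 2 - ∑ h ∈ S, π h ^ 2) / d0)
              + Real.log ((((∑ h ∈ S, π h * pathCost q c T' h)
                  - (1 - ε) * c i * mass π S))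
                / (∑ h ∈ S, π h * pathCost q c T' h)) + 1) := by
        rw [← Finset.sum_filter_add_sum_filter_not Finset.univ
          (fun a : A => 2 ≤ (S.filter (fun s => q i s = a)).card), Finset.sum_mul]
        have hzero : ∑ a ∈ Finset.univ.filter
            (fun a : A => ¬ 2 ≤ (S.filter (fun s => q i s = a)).card),
            (∑ h ∈ S.filter (fun s => q i s = a), π h * pathCost q c T' h)
            * (if 2 ≤ (S.filter (fun s => q i s = a)).card then
                Real.log ((mass π (S.filter fun s => q i s = a) ^ 2
                  - ∑ h ∈ S.filter (fun s => q i s = a), π h ^ 2) / d0) + 1 else 0)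
          = 0 := Finset.sum_eq_zero fun a ha => by
            rw [if_neg (Finset.mem_filter.1 ha).2]; ring
        rw [hzero, add_zero]
        refine Finset.sum_le_sum fun a ha => ?_
        have hmem := (Finset.mem_filter.1 ha).2
        rw [if_pos hmem]
        exact mul_le_mul_of_nonneg_left (hBa a hmem) (hCfib0 a)
      have hW'0 : 0 ≤ ∑ a ∈ Finset.univ.filter
          (fun a : A => 2 ≤ (S.filter (fun s => q i s = a)).card),
          ∑ h ∈ S.filter (fun s => q i s = a), π h * pathCost q c T' h :=
        Finset.sum_nonneg fun a _ => hCfib0 a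
      have hW'C : ∑ a ∈ Finset.univ.filter
            (fun a : A => 2 ≤ (S.filter (fun s => q i s = a)).card),
            ∑ h ∈ S.filter (fun s => q i s = a), π h * pathCost q c T' h
          ≤ ∑ h ∈ S, π h * pathCost q c T' h := by
        rw [← hCsplit]
        exact Finset.sum_le_sum_of_subset_of_nonneg (Finset.filter_subset _ _)
          fun a _ _ => hCfib0 a
      -- chain the child bounds
      have hsum_child : ∑ a : A, ∑ h ∈ S.filter (fun s => q i s = a),
            π h * pathCost q c (ch a) h
          ≤ (1 / (1 - ε)) * ∑ a : A,
              (∑ h ∈ S.filter (fun s => q i s = a), π h * pathCost q c T' h)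
              * (if 2 ≤ (S.filter (fun s => q i s = a)).card then
                  Real.log ((mass π (S.filter fun s => q i s = a) ^ 2
                    - ∑ h ∈ S.filter (fun s => q i s = a), π h ^ 2) / d0) + 1 else 0) := by
        rw [Finset.mul_sum]
        refine Finset.sum_le_sum fun a _ => ?_
        calc ∑ h ∈ S.filter (fun s => q i s = a), π h * pathCost q c (ch a) h
            ≤ (1 / (1 - ε))
              * (∑ h ∈ S.filter (fun s => q i s = a), π h * pathCost q c T' h)
              * (if 2 ≤ (S.filter (fun s => q i s = a)).card then
                  Real.log ((mass π (S.filter fun s => q i s = a) ^ 2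
                    - ∑ h ∈ S.filter (fun s => q i s = a), π h ^ 2) / d0) + 1 else 0) :=
              hchild a
          _ = _ := by ring
      -- conclude with the standalone numeric lemma
      have hKpos : (0:ℝ) ≤ 1 / (1 - ε) := by positivity
      have hchild2 := le_trans hsum_child
        (mul_le_mul_of_nonneg_left hBsplit hKpos)
      exact numeric_step ε (c i) (mass π S) _ _ _ _ _ h1e hC hL hW'0 hW'C huC hlam' hchild2
    · -- all children are singletons or empty
      push_neg at hJ
      have hz : ∀ a : A,
          ∑ h ∈ S.filter (fun s => q i s = a), π h * pathCost q c (ch a) h ≤ 0 := by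
        intro a
        have := hchild a
        rw [if_neg (by exact not_le.2 (hJ a)), mul_zero] at this
        exact this
      have hsum0 : ∑ a : A, ∑ h ∈ S.filter (fun s => q i s = a),
          π h * pathCost q c (ch a) h ≤ 0 :=
        Finset.sum_nonpos fun a _ => hz a
      have hci : c i * mass π S
          ≤ (1 / (1 - ε)) * (∑ h ∈ S, π h * pathCost q c T' h)
            * (Real.log ((mass π S ^ 2 - ∑ h ∈ S, π h ^ 2) / d0) + 1) := by
        rw [div_mul_eq_mul_div, div_mul_eq_mul_div, le_div_iff₀ h1e]
        nlinarith [huC, hC, hL]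
      linarith
lemma Dm_lower {π : H → ℝ} (hπ : ∀ h, 0 < π h) (m0 : ℝ)
    (hm0 : ∀ h, m0 ≤ π h) (hm0pos : 0 < m0) :
    ∀ R : Finset H, 2 ≤ R.card → m0 ^ 2 ≤ mass π R ^ 2 - ∑ h ∈ R, π h ^ 2 := by
  intro R hR
  have hRne : R.Nonempty := Finset.card_pos.1 (by omega)
  obtain ⟨x, hx⟩ := hRne
  have hmassm0 : m0 ≤ mass π R :=
    le_trans (hm0 x) (Finset.single_le_sum (fun h _ => (hπ h).le) hx)
  have hub : ∀ h ∈ R, π h ≤ mass π R - m0 := by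
    intro h hh
    obtain ⟨y, hy, hyh⟩ := Finset.exists_mem_ne (show 1 < R.card by omega) h
    have hsub : ({h, y} : Finset H) ⊆ R := by
      intro z hz
      rcases Finset.mem_insert.1 hz with rfl | hz'
      · exact hh
      · rw [Finset.mem_singleton.1 hz']; exact hy
    have hpair : π h + π y ≤ mass π R := by
      have hle := Finset.sum_le_sum_of_subset_of_nonneg hsub
        (fun z _ _ => (hπ z).le)
      rwa [Finset.sum_pair (Ne.symm hyh)] at hle
    linarith [hm0 y]
  have hQ : ∑ h ∈ R, π h ^ 2 ≤ ∑ h ∈ R, π h * (mass π R - m0) :=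
    Finset.sum_le_sum fun h hh => by nlinarith [hub h hh, (hπ h).le]
  have hsum : ∑ h ∈ R, π h * (mass π R - m0) = mass π R * (mass π R - m0) := by
    rw [← Finset.sum_mul]; rfl
  nlinarith [hmassm0, hm0pos]

end Core

/-- An `ε`-approximate greedy query tree `T^ε` for `π` has cost at most
`C(T^ε, π) ≤ (12/(1−ε)) · C* · ln( 1 / min_{h∈H} π(h) )`, where `C*` is the minimum cost
over all query trees whose leaves are `H` (formalized: the bound holds against every
such tree). -/
theorem approx_greedy_cost_bound [Fintype H] [Nonempty H] [Fintype A]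
    [DecidableEq H] [DecidableEq A]
    (π : H → ℝ) (hπpos : ∀ h, 0 < π h) (hπsum : ∑ h : H, π h = 1)
    (hH : 1 < Fintype.card H)
    (q : Fin m → H → A) (c : Fin m → ℝ) (hc : ∀ i, 0 < c i)
    (hdist : ∀ h h' : H, h ≠ h' → ∃ i : Fin m, q i h ≠ q i h')
    (ε : ℝ) (hε0 : 0 ≤ ε) (hε1 : ε < 1)
    (Tε : QTree m H A) (hTε : IsApproxGreedy ε q c π Tε Finset.univ) :
    ∀ T : QTree m H A, ValidOn q T Finset.univ →
      treeCost q c Tε π ≤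
        (12 / (1 - ε)) * treeCost q c T π *
          Real.log (1 / Finset.univ.inf' Finset.univ_nonempty π) := by
  intro T hTvalid
  have h1e : (0:ℝ) < 1 - ε := by linarith
  set m0 := Finset.univ.inf' Finset.univ_nonempty π with hm0def
  have hm0le : ∀ h : H, m0 ≤ π h := fun h => Finset.inf'_le π (Finset.mem_univ h)
  have hm0pos : 0 < m0 := by
    obtain ⟨h0, _, he⟩ := Finset.exists_mem_eq_inf' Finset.univ_nonempty π
    rw [hm0def, he]; exact hπpos h0
  obtain ⟨x, y, hxy⟩ := Fintype.exists_pair_of_one_lt_card hH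
  cases T with
  | leaf h0 =>
    exfalso
    have hx := hTvalid x (Finset.mem_univ x)
    have hy := hTvalid y (Finset.mem_univ y)
    have hx' : h0 = x := hx
    have hy' : h0 = y := hy
    exact hxy (hx' ▸ hy' ▸ rfl)
  | node i0 ch0 =>
    have hpc' : ∀ h : H, 0 < pathCost q c (QTree.node i0 ch0) h := by
      intro h
      have h1 := pathCost_nonneg q c (fun i => (hc i).le) (ch0 (q i0 h)) h
      have h2 := hc i0
      show 0 < c i0 + pathCost q c (ch0 (q i0 h)) h
      linarith
    have hTvalid' : ∀ h : H, follow q (QTree.node i0 ch0) h = h :=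
      fun h => hTvalid h (Finset.mem_univ h)
    have hbound := greedy_cost_aux q c π hπpos hc ε hε1 (QTree.node i0 ch0) hpc'
      (m0 ^ 2) (by positivity) (Dm_lower hπpos m0 hm0le hm0pos) hTvalid' hTε
    have h2card : 2 ≤ (Finset.univ : Finset H).card := by
      rw [Finset.card_univ]; exact hH
    rw [if_pos h2card] at hbound
    have hmass1 : mass π Finset.univ = 1 := hπsum
    have hQpos : 0 < ∑ h ∈ Finset.univ, π h ^ 2 :=
      Finset.sum_pos (fun h _ => pow_pos (hπpos h) 2) Finset.univ_nonempty
    have hDpos : 0 < mass π Finset.univ ^ 2 - ∑ h ∈ Finset.univ, π h ^ 2 :=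
      lt_of_lt_of_le (by positivity : (0:ℝ) < m0 ^ 2)
        (Dm_lower hπpos m0 hm0le hm0pos Finset.univ h2card)
    have hDle1 : mass π Finset.univ ^ 2 - ∑ h ∈ Finset.univ, π h ^ 2 ≤ 1 := by
      rw [hmass1]; nlinarith [hQpos]
    have hlog1 : Real.log ((mass π Finset.univ ^ 2
          - ∑ h ∈ Finset.univ, π h ^ 2) / m0 ^ 2)
        ≤ Real.log (1 / m0 ^ 2) :=
      Real.log_le_log (div_pos hDpos (by positivity))
        (div_le_div_of_nonneg_right hDle1 (sq_nonneg m0))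
    have hlogpow : Real.log (1 / m0 ^ 2) = 2 * Real.log (1 / m0) := by
      rw [one_div, Real.log_inv, Real.log_pow, one_div, Real.log_inv]
      push_cast; ring
    have hm0half : 2 * m0 ≤ 1 := by
      have hsub : ({x, y} : Finset H) ⊆ Finset.univ := Finset.subset_univ _
      have hpair : π x + π y ≤ 1 := by
        have hle := Finset.sum_le_sum_of_subset_of_nonneg hsub
          (fun z _ _ => (hπpos z).le)
        rw [Finset.sum_pair hxy] at hle
        calc π x + π y ≤ ∑ h ∈ Finset.univ, π h := hle
          _ = 1 := hπsum
      linarith [hm0le x, hm0le y]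
    have hX2 : Real.log 2 ≤ Real.log (1 / m0) :=
      Real.log_le_log two_pos ((le_div_iff₀ hm0pos).2 (by linarith))
    have hX01 : (0.1 : ℝ) ≤ Real.log (1 / m0) := by
      have := Real.log_two_gt_d9
      linarith
    have hC : 0 < treeCost q c (QTree.node i0 ch0) π :=
      Finset.sum_pos (fun h _ => mul_pos (hπpos h) (hpc' h)) Finset.univ_nonempty
    have hb1 : Real.log ((mass π Finset.univ ^ 2
          - ∑ h ∈ Finset.univ, π h ^ 2) / m0 ^ 2) + 1
        ≤ 12 * Real.log (1 / m0) := by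
      have := hlogpow ▸ hlog1
      linarith
    have hKC : (0:ℝ) ≤ 1 / (1 - ε) * treeCost q c (QTree.node i0 ch0) π := by
      positivity
    calc treeCost q c Tε π
        = ∑ h ∈ Finset.univ, π h * pathCost q c Tε h := rfl
      _ ≤ (1 / (1 - ε)) * (∑ h ∈ Finset.univ, π h * pathCost q c (QTree.node i0 ch0) h)
            * (Real.log ((mass π Finset.univ ^ 2
              - ∑ h ∈ Finset.univ, π h ^ 2) / m0 ^ 2) + 1) := hbound
      _ = (1 / (1 - ε)) * treeCost q c (QTree.node i0 ch0) π
            * (Real.log ((mass π Finset.univ ^ 2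
              - ∑ h ∈ Finset.univ, π h ^ 2) / m0 ^ 2) + 1) := rfl
      _ ≤ (1 / (1 - ε)) * treeCost q c (QTree.node i0 ch0) π
            * (12 * Real.log (1 / m0)) :=
          mul_le_mul_of_nonneg_left hb1 hKC
      _ = (12 / (1 - ε)) * treeCost q c (QTree.node i0 ch0) π * Real.log (1 / m0) := by
          ring

end ActiveLearning
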